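/- Let X_obs ⊆ ℝ² be a nonempty finite union of two-dimensional convex polytopes (convex hulls of finite sets), let b > 0, and let the buffered obstacle be X_obs^b = {p ∈ ℝ² : ∃ p' ∈ X_obs, ‖p − p'‖ ≤ b}. Then the frontier of X_obs^b is contained in the union of finitely many line segments together with finitely many circles of radius b (metric spheres of radius b centered at points of X_obs). -/

import Mathlib

open Set Real RealInnerProductSpace

noncomputable section

abbrev Pt := EuclideanSpace ℝ (Fin 2)

/-- The closed segment `[a, b]`. -/
def seg (a b : Pt) : Set Pt := segment ℝ a b

/-- The line through `a` and `b`. -/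
def lineThrough (a b : Pt) : Set Pt := {p : Pt | ∃ s : ℝ, p = a + s • (b - a)}

/-- Rotation of the plane by angle `α` about the origin. -/
def rot (α : ℝ) (p : Pt) : Pt :=
  !₂[Real.cos α * p 0 - Real.sin α * p 1, Real.sin α * p 0 + Real.cos α * p 1]

/-- A vector normal to the segment from `a` to `b`. -/
def nvec (a b : Pt) : Pt := !₂[-(b 1 - a 1), b 0 - a 0]

/-- The closed half-plane bounded by the line through `a` and `b` containing `c`. -/
def halfPlane (a b c : Pt) : Set Pt :=
  if 0 ≤ ⟪nvec a b, c - a⟫ then {p : Pt | 0 ≤ ⟪nvec a b, p - a⟫}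
  else {p : Pt | ⟪nvec a b, p - a⟫ ≤ 0}

/-- Orthogonal projection of `p` onto the line through `a` and `b`. -/
def lineProj (a b p : Pt) : Pt :=
  a + (⟪p - a, b - a⟫ / ⟪b - a, b - a⟫) • (b - a)

/-- A continuous family of direct planar isometries indexed by `t ∈ [0, T]`,
each of the form `p ↦ rot (θ t) (p - c) + s t + c`. -/
structure TransFam (c : Pt) (T : ℝ) where
  θ : ℝ → ℝ
  trans : ℝ → Pt
  contθ : ContinuousOn θ (Icc 0 T)
  contTrans : ContinuousOn trans (Icc 0 T)

/-- The isometry at time `t`. -/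
def TransFam.R {c : Pt} {T : ℝ} (F : TransFam c T) (t : ℝ) (p : Pt) : Pt :=
  rot (F.θ t) (p - c) + F.trans t + c

/-- The family `F` attempts to pass `X₀` through the segment with endpoints `e₁, e₂`,
where `c ∈ X₀` is the reference point (so `halfPlane e₁ e₂ c` is the half-plane containing
`X₀`). -/
def AttemptsPass {c : Pt} {T : ℝ} (F : TransFam c T) (X₀ : Set Pt) (e₁ e₂ : Pt) : Prop :=
  ∃ t₀ t₁ : ℝ, 0 < t₀ ∧ t₀ ≤ t₁ ∧ t₁ ≤ T ∧
    (∀ t ∈ Icc t₀ t₁, (F.R t '' X₀ ∩ (seg e₁ e₂ \ {e₁, e₂})).Nonempty) ∧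
    (∀ t ∈ Ico 0 t₀, F.R t '' X₀ ⊆ halfPlane e₁ e₂ c) ∧
    (∀ t ∈ Ico 0 T, e₁ ∉ F.R t '' X₀ ∧ e₂ ∉ F.R t '' X₀)

/-- Penetration distance of `X₀` through the segment `[e₁, e₂]` under the family `F`:
the supremum of distances to the line `ℓ_I` over points of `R_T(X₀)` outside the
half-plane `P_I` whose orthogonal projection onto `ℓ_I` lies in `I` (`0` if empty,
via `Real.sSup_empty`). -/
def penetration {c : Pt} {T : ℝ} (F : TransFam c T) (X₀ : Set Pt) (e₁ e₂ : Pt) : ℝ :=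
  sSup {d : ℝ | ∃ p, p ∈ F.R T '' X₀ ∧ p ∉ halfPlane e₁ e₂ c ∧
      lineProj e₁ e₂ p ∈ seg e₁ e₂ ∧ d = Metric.infDist p (lineThrough e₁ e₂)}

/-- The width of a planar set: the infimum over unit directions `u` of
`sup ⟪x,u⟫ - inf ⟪x,u⟫` over `x ∈ K`. -/
def width (K : Set Pt) : ℝ :=
  sInf {w : ℝ | ∃ u : Pt, ‖u‖ = 1 ∧
    w = sSup ((fun x => ⟪x, u⟫) '' K) - sInf ((fun x => ⟪x, u⟫) '' K)}

/-- Penetration of `X₀` into the circle `C` through the chord `[e₁, e₂]` under `F`. -/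
def penetrationCircle {c : Pt} {T : ℝ} (F : TransFam c T) (X₀ : Set Pt) (C : Set Pt)
    (e₁ e₂ : Pt) : ℝ :=
  sSup {d : ℝ | ∃ p₁ p₂, p₁ ∈ F.R T '' X₀ ∩ C ∧ p₂ ∈ F.R T '' X₀ \ halfPlane e₁ e₂ c ∧
      d = ‖p₁ - p₂‖}


/-- The set of penetration distances achievable by passing `X₀` through some segment of
length `L` whose line is disjoint from `X₀` and with `X₀` in the interior of the
corresponding half-plane, under some transformation family attempting the pass. -/
def penSet (X₀ : Set Pt) (c : Pt) (L : ℝ) : Set ℝ :=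
  {p : ℝ | ∃ e₁ e₂ : Pt, e₁ ≠ e₂ ∧ ‖e₂ - e₁‖ = L ∧
    lineThrough e₁ e₂ ∩ X₀ = ∅ ∧ X₀ ⊆ interior (halfPlane e₁ e₂ c) ∧
    ∃ T : ℝ, 0 < T ∧ ∃ F : TransFam c T, AttemptsPass F X₀ e₁ e₂ ∧
      p = penetration F X₀ e₁ e₂}

/-- The axis-aligned rectangle `[0, L] × [0, W]`. -/
def rect (L W : ℝ) : Set Pt := {p : Pt | p 0 ∈ Icc 0 L ∧ p 1 ∈ Icc 0 W}


open Pointwise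

lemma pt_ext {x y : Pt} (h0 : x 0 = y 0) (h1 : x 1 = y 1) : x = y := by
  ext i; fin_cases i <;> assumption

lemma inner2 (x y : Pt) : ⟪x, y⟫ = x 0 * y 0 + x 1 * y 1 := by
  simp [PiLp.inner_apply, Fin.sum_univ_two, RCLike.inner_apply]; ring

lemma norm_sq2 (x : Pt) : ‖x‖^2 = x 0^2 + x 1^2 := by
  rw [← real_inner_self_eq_norm_sq, inner2]; ring

def rot90 (x : Pt) : Pt := !₂[-(x 1), x 0]

lemma rot90_apply0 (x : Pt) : rot90 x 0 = -(x 1) := rfl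
lemma rot90_apply1 (x : Pt) : rot90 x 1 = x 0 := rfl
lemma smul_apply' (c : ℝ) (x : Pt) (i : Fin 2) : (c • x) i = c * x i := rfl

lemma ne_zero_comp {u : Pt} (hu : u ≠ 0) : u 0 ≠ 0 ∨ u 1 ≠ 0 := by
  by_contra h
  push_neg at h
  exact hu (pt_ext (by simpa using h.1) (by simpa using h.2))

lemma norm_rot90 (x : Pt) : ‖rot90 x‖ = ‖x‖ := by
  have h : ‖rot90 x‖^2 = ‖x‖^2 := by
    rw [norm_sq2, norm_sq2, rot90_apply0, rot90_apply1]; ring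
  nlinarith [norm_nonneg (rot90 x), norm_nonneg x]

lemma rot90_neg (x : Pt) : rot90 (-x) = -(rot90 x) := by
  apply pt_ext <;> rfl

lemma rot90_ne_zero {x : Pt} (hx : x ≠ 0) : rot90 x ≠ 0 := by
  intro h
  apply hx
  apply pt_ext
  · have := congrArg (fun y : Pt => y 1) h; simpa [rot90_apply1] using this
  · have := congrArg (fun y : Pt => y 0) h
    simp only [rot90_apply0] at this
    simpa using (neg_eq_zero.mp (by simpa using this))

lemma perp_rep {u z : Pt} (hu : u ≠ 0) (h : ⟪u, z⟫ = 0) :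
    ∃ c : ℝ, z = c • rot90 u := by
  have hn : u 0 ^ 2 + u 1 ^ 2 ≠ 0 := by
    rcases ne_zero_comp hu with h' | h' <;> positivity
  refine ⟨(u 0 * z 1 - u 1 * z 0) / (u 0 ^ 2 + u 1 ^ 2), ?_⟩
  rw [inner2] at h
  apply pt_ext
  · rw [smul_apply', rot90_apply0]; field_simp; linear_combination u 0 * h
  · rw [smul_apply', rot90_apply1]; field_simp; linear_combination u 1 * h

lemma key (V : Finset Pt) (p q : Pt) (b : ℝ) (hb : 0 < b)
    (hq : q ∈ convexHull ℝ (V : Set Pt))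
    (hpq : ‖p - q‖ = b)
    (hmin : ∀ x ∈ convexHull ℝ (V : Set Pt), b ≤ ‖p - x‖) :
    (∃ v ∈ V, ‖p - v‖ = b) ∨
    (∃ v₁ ∈ V, ∃ v₂ ∈ V, v₁ ≠ v₂ ∧
      p ∈ segment ℝ (v₁ + (b / ‖v₂ - v₁‖) • rot90 (v₂ - v₁))
            (v₂ + (b / ‖v₂ - v₁‖) • rot90 (v₂ - v₁))) := by
  classical
  set u := p - q with hu_def
  have hub : ‖u‖ = b := hpq
  have hu : u ≠ 0 := by
    intro h
    rw [h, norm_zero] at hub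
    exact hb.ne hub
  have hK : Convex ℝ (convexHull ℝ (V : Set Pt)) := convex_convexHull ℝ _
  haveI : Nonempty ((convexHull ℝ (V : Set Pt)) : Set Pt) := ⟨⟨q, hq⟩⟩
  have hinf : ‖p - q‖ = ⨅ w : (convexHull ℝ (V : Set Pt)), ‖p - (w : Pt)‖ := by
    apply le_antisymm
    · exact le_ciInf fun w => hpq ▸ hmin w.1 w.2
    · refine ciInf_le ⟨0, ?_⟩ (⟨q, hq⟩ : (convexHull ℝ (V : Set Pt)))
      rintro r ⟨w, rfl⟩
      exact norm_nonneg _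
  have hobtuse : ∀ x ∈ convexHull ℝ (V : Set Pt), ⟪u, x - q⟫ ≤ 0 :=
    (norm_eq_iInf_iff_real_inner_le_zero hK hq).1 hinf
  have hq2 : q ∈ {x : Pt | ∃ w : Pt → ℝ, (∀ y ∈ V, 0 ≤ w y) ∧
      ∑ y ∈ V, w y = 1 ∧ V.centerMass w id = x} := by
    rw [← Finset.convexHull_eq]; exact hq
  obtain ⟨w, hw₀, hw₁, hcm⟩ := hq2
  have hqsum : ∑ v ∈ V, w v • v = q := by
    rw [← hcm, Finset.centerMass_eq_of_sum_1 _ _ hw₁]; rfl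
  set V' := V.filter (fun v => ⟪u, v - q⟫ = 0) with hV'_def
  have hmemV' : ∀ v ∈ V', ⟪u, v - q⟫ = 0 := fun v hv => (Finset.mem_filter.mp hv).2
  have hVsub : ∀ v ∈ V, v ∉ V' → w v = 0 := by
    have hzero : ∑ v ∈ V, w v • (v - q) = 0 := by
      have h1 : ∑ v ∈ V, w v • (v - q) = (∑ v ∈ V, w v • v) - (∑ v ∈ V, w v) • q := by
        rw [Finset.sum_smul, ← Finset.sum_sub_distrib]
        exact Finset.sum_congr rfl fun v _ => smul_sub _ _ _
      rw [h1, hqsum, hw₁, one_smul, sub_self]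
    have hsum0 : ∑ v ∈ V, w v * ⟪u, v - q⟫ = 0 := by
      have h2 : ⟪u, ∑ v ∈ V, w v • (v - q)⟫ = (0 : ℝ) := by
        rw [hzero, inner_zero_right]
      rw [inner_sum] at h2
      simp_rw [real_inner_smul_right] at h2
      exact h2
    have hterm : ∀ v ∈ V, w v * ⟪u, v - q⟫ ≤ 0 := fun v hv =>
      mul_nonpos_iff.2 (Or.inl ⟨hw₀ v hv, hobtuse v (subset_convexHull ℝ _ hv)⟩)
    intro v hv hnv
    have h3 := (Finset.sum_eq_zero_iff_of_nonpos hterm).1 hsum0 v hv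
    rcases mul_eq_zero.mp h3 with h | h
    · exact h
    · exact absurd (Finset.mem_filter.mpr ⟨hv, h⟩) hnv
  have hw₁' : ∑ v ∈ V', w v = 1 := by
    rw [← hw₁]
    exact Finset.sum_subset (Finset.filter_subset _ _) hVsub
  have hq' : q ∈ convexHull ℝ (V' : Set Pt) := by
    have hcm' : V'.centerMass w id = q := by
      rw [Finset.centerMass_eq_of_sum_1 _ _ hw₁', ← hqsum]
      exact Finset.sum_subset (Finset.filter_subset _ _)
        (fun v hv hnv => by rw [hVsub v hv hnv, zero_smul])
    rw [← hcm']
    exact Finset.centerMass_mem_convexHull _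
      (fun i hi => hw₀ i (Finset.filter_subset _ _ hi))
      (by rw [hw₁']; norm_num) (fun i hi => Finset.mem_coe.2 hi)
  have hV'ne : V'.Nonempty := by
    rcases V'.eq_empty_or_nonempty with h | h
    · rw [h, Finset.coe_empty, convexHull_empty] at hq'
      exact absurd hq' (Set.notMem_empty q)
    · exact h
  set wv := rot90 u with hwv_def
  have hwvne : wv ≠ 0 := rot90_ne_zero hu
  have hwvin : ⟪wv, wv⟫ ≠ 0 := by
    rw [real_inner_self_eq_norm_sq]
    exact pow_ne_zero 2 (norm_ne_zero_iff.2 hwvne)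
  set c : Pt → ℝ := fun v => ⟪v - q, wv⟫ / ⟪wv, wv⟫ with hc_def
  have hrep : ∀ v ∈ V', v = q + c v • wv := by
    intro v hv
    obtain ⟨c₀, hc₀⟩ := perp_rep hu (hmemV' v hv)
    have hcv : c v = c₀ := by
      show ⟪v - q, wv⟫ / ⟪wv, wv⟫ = c₀
      rw [hc₀, ← hwv_def, real_inner_smul_left]
      exact mul_div_cancel_right₀ c₀ hwvin
    rw [hcv, ← hc₀]
    abel
  obtain ⟨vmin, hvminV', hvminle⟩ := V'.exists_min_image c hV'ne
  obtain ⟨vmax, hvmaxV', hvmaxle⟩ := V'.exists_max_image c hV'ne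
  rcases lt_or_ge (c vmin) (c vmax) with hC | hC
  swap
  · -- degenerate : all points of V' coincide, q is a vertex
    left
    have hall : (V' : Set Pt) ⊆ {vmin} := by
      intro v hv
      have h1 : c v = c vmin := le_antisymm ((hvmaxle v hv).trans hC) (hvminle v hv)
      have := hrep v hv
      rw [h1, ← hrep vmin hvminV'] at this
      exact Set.mem_singleton_iff.mpr this
    have : q ∈ ({vmin} : Set Pt) := convexHull_min hall (convex_singleton _) hq'
    rw [Set.mem_singleton_iff] at this
    exact ⟨vmin, Finset.filter_subset _ _ hvminV', by rw [← this]; exact hpq⟩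
  · -- edge case
    have hne : vmin ≠ vmax := fun h => absurd (h ▸ hC) (lt_irrefl _)
    set d := vmax - vmin with hd_def
    have hmax1 : vmax - q = c vmax • wv := sub_eq_of_eq_add' (hrep vmax hvmaxV')
    have hmin1 : vmin - q = c vmin • wv := sub_eq_of_eq_add' (hrep vmin hvminV')
    have hd : d = (c vmax - c vmin) • wv := by
      have h3 : d = (vmax - q) - (vmin - q) := by rw [hd_def]; abel
      rw [h3, hmax1, hmin1, sub_smul]
    have hdne : d ≠ 0 := by
      rw [hd]
      exact smul_ne_zero (sub_ne_zero.2 hC.ne') hwvne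
    have hdn : ‖d‖ ≠ 0 := norm_ne_zero_iff.2 hdne
    -- q lies on the segment [vmin, vmax]
    have hseg : (V' : Set Pt) ⊆ segment ℝ vmin vmax := by
      intro v hv
      rw [segment_eq_image']
      refine ⟨(c v - c vmin) / (c vmax - c vmin),
        ⟨div_nonneg (sub_nonneg.2 (hvminle v hv)) (sub_nonneg.2 hC.le),
         (div_le_one (by linarith)).2 (by linarith [hvmaxle v hv])⟩, ?_⟩
      beta_reduce
      rw [← hd_def, hd, smul_smul, div_mul_cancel₀ _ (by linarith : c vmax - c vmin ≠ 0)]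
      have hv1 : v - q = c v • wv := sub_eq_of_eq_add' (hrep v hv)
      have h5 : (c v - c vmin) • wv = (v - q) - (vmin - q) := by
        rw [sub_smul, hv1, hmin1]
      rw [h5]
      abel
    have hqseg : q ∈ segment ℝ vmin vmax :=
      convexHull_min hseg (convex_segment _ _) hq'
    rw [segment_eq_image'] at hqseg
    obtain ⟨t, ht01, hqt⟩ := hqseg
    beta_reduce at hqt
    rw [← hd_def] at hqt
    -- direction of u
    have hud : ⟪d, u⟫ = 0 := by
      rw [real_inner_comm]
      have h1 : d = (vmax - q) - (vmin - q) := by rw [hd_def]; abel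
      rw [h1, inner_sub_right, hmemV' vmax hvmaxV', hmemV' vmin hvminV', sub_zero]
    obtain ⟨c', hc'⟩ := perp_rep hdne hud
    have hcnorm : |c'| * ‖d‖ = b := by
      rw [← hub, hc', norm_smul, norm_rot90, Real.norm_eq_abs]
    have hc'ne : c' ≠ 0 := by
      intro h
      rw [h, abs_zero, zero_mul] at hcnorm
      exact hb.ne hcnorm
    right
    rcases hc'ne.lt_or_gt with hcneg | hcpos
    · -- u = -(b/‖d‖) • rot90 d ; use the pair (vmax, vmin)
      refine ⟨vmax, Finset.filter_subset _ _ hvmaxV', vmin, Finset.filter_subset _ _ hvminV',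
        hne.symm, ?_⟩
      have hmu : (b / ‖vmin - vmax‖) • rot90 (vmin - vmax) = u := by
        have h1 : vmin - vmax = -d := by rw [hd_def]; abel
        have h2 : c' = -(b / ‖d‖) := by
          have : |c'| = -c' := abs_of_neg hcneg
          rw [this] at hcnorm
          field_simp
          linarith
        rw [h1, rot90_neg, norm_neg, smul_neg, hc', h2]
        rw [neg_smul]
      rw [segment_eq_image']
      refine ⟨1 - t, ⟨by linarith [ht01.2], by linarith [ht01.1]⟩, ?_⟩
      beta_reduce
      rw [hmu]
      have h3 : vmin + u - (vmax + u) = -d := by rw [hd_def]; abel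
      rw [h3]
      have h4 : p = q + u := by rw [hu_def]; abel
      have h6 : vmax = vmin + d := by rw [hd_def]; abel
      rw [h4, ← hqt, h6]
      module
    · -- u = (b/‖d‖) • rot90 d ; use the pair (vmin, vmax)
      refine ⟨vmin, Finset.filter_subset _ _ hvminV', vmax, Finset.filter_subset _ _ hvmaxV',
        hne, ?_⟩
      have hmu : (b / ‖vmax - vmin‖) • rot90 (vmax - vmin) = u := by
        have h2 : c' = b / ‖d‖ := by
          have : |c'| = c' := abs_of_pos hcpos
          rw [this] at hcnorm
          field_simp
          linarith
        rw [← hd_def, hc', h2]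
      rw [segment_eq_image']
      refine ⟨t, ht01, ?_⟩
      beta_reduce
      rw [hmu]
      have h3 : vmax + u - (vmin + u) = d := by rw [hd_def]; abel
      rw [h3]
      have h4 : p = q + u := by rw [hu_def]; abel
      rw [h4, ← hqt]
      module

/-- The frontier of the buffered obstacle `X_obs^b = {p : ∃ p' ∈ X_obs, ‖p - p'‖ ≤ b}`,
where `X_obs` is a nonempty finite union of two-dimensional convex polytopes (convex hulls
of finite sets with nonempty interior), is contained in the union of finitely many line
segments and finitely many circles of radius `b` centered at points of `X_obs`. -/
theorem buffered_obstacle_boundary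
    (X_obs : Set Pt)
    (hXobs : ∃ (N : ℕ) (V : Fin N → Finset Pt), 0 < N ∧
      X_obs = ⋃ i, convexHull ℝ (V i : Set Pt) ∧
      ∀ i, (interior (convexHull ℝ ((V i : Set Pt)))).Nonempty)
    (b : ℝ) (hb : 0 < b) :
    ∃ (nL nA : ℕ) (E : Fin nL → Pt × Pt) (q : Fin nA → Pt),
      (∀ j, q j ∈ X_obs) ∧
      frontier {p : Pt | ∃ p' ∈ X_obs, ‖p - p'‖ ≤ b} ⊆
        (⋃ i, seg (E i).1 (E i).2) ∪ (⋃ j, Metric.sphere (q j) b) := by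
  classical
  obtain ⟨N, V, hN, hXeq, hint⟩ := hXobs
  set S := {p : Pt | ∃ p' ∈ X_obs, ‖p - p'‖ ≤ b} with hS_def
  have hXcomp : IsCompact X_obs := by
    rw [hXeq]
    exact isCompact_iUnion fun i => (V i).finite_toSet.isCompact_convexHull (𝕜 := ℝ)
  have hSeq : S = X_obs + Metric.closedBall (0 : Pt) b := by
    ext p
    constructor
    · rintro ⟨p', hp', hle⟩
      exact ⟨p', hp', p - p', by rwa [Metric.mem_closedBall, dist_zero_right], by module⟩
    · rintro ⟨x, hx, y, hy, rfl⟩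
      refine ⟨x, hx, ?_⟩
      rw [Metric.mem_closedBall, dist_zero_right] at hy
      rwa [add_sub_cancel_left]
  have hSclosed : IsClosed S := by
    rw [hSeq]
    exact (hXcomp.add (isCompact_closedBall (0 : Pt) b)).isClosed
  -- vertex list
  set W : Finset Pt := Finset.univ.biUnion V with hW_def
  have hWX : ∀ v ∈ W, v ∈ X_obs := by
    intro v hv
    obtain ⟨i, _, hvi⟩ := Finset.mem_biUnion.mp hv
    rw [hXeq]
    exact Set.mem_iUnion.2 ⟨i, subset_convexHull ℝ _ hvi⟩
  set l : List Pt := W.toList with hl_def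
  have hlW : ∀ v ∈ W, ∃ j : Fin l.length, l.get j = v := by
    intro v hv
    exact List.mem_iff_get.mp (by rwa [hl_def, Finset.mem_toList])
  set nA := l.length with hnA_def
  set qf : Fin nA → Pt := fun j => l.get j with hqf_def
  set Ef : Fin (nA * nA) → Pt × Pt := fun k =>
    (qf (finProdFinEquiv.symm k).1 +
        (b / ‖qf (finProdFinEquiv.symm k).2 - qf (finProdFinEquiv.symm k).1‖) •
          rot90 (qf (finProdFinEquiv.symm k).2 - qf (finProdFinEquiv.symm k).1),
     qf (finProdFinEquiv.symm k).2 +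
        (b / ‖qf (finProdFinEquiv.symm k).2 - qf (finProdFinEquiv.symm k).1‖) •
          rot90 (qf (finProdFinEquiv.symm k).2 - qf (finProdFinEquiv.symm k).1)) with hEf_def
  refine ⟨nA * nA, nA, Ef, qf, ?_, ?_⟩
  · intro j
    exact hWX (qf j) (Finset.mem_toList.mp (List.get_mem l j))
  · intro p hp
    have hpS : p ∈ S := hSclosed.closure_eq ▸ frontier_subset_closure hp
    have hpnotint : p ∉ interior S := by
      rw [← closure_diff_interior] at hp
      exact hp.2
    have hmin : ∀ x ∈ X_obs, b ≤ ‖p - x‖ := by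
      by_contra h
      push_neg at h
      obtain ⟨x, hx, hlt⟩ := h
      apply hpnotint
      rw [mem_interior]
      refine ⟨Metric.ball p (b - ‖p - x‖), ?_, Metric.isOpen_ball,
        Metric.mem_ball_self (by linarith)⟩
      intro y hy
      rw [Metric.mem_ball, dist_eq_norm] at hy
      refine ⟨x, hx, ?_⟩
      have h3 : y - x = (y - p) + (p - x) := by abel
      calc ‖y - x‖ ≤ ‖y - p‖ + ‖p - x‖ := by rw [h3]; exact norm_add_le _ _
        _ ≤ b := by linarith
    obtain ⟨q, hq, hqle⟩ := hpS
    have hpq : ‖p - q‖ = b := le_antisymm hqle (hmin q hq)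
    rw [hXeq] at hq
    obtain ⟨i, hqi⟩ := Set.mem_iUnion.mp hq
    have hmin' : ∀ x ∈ convexHull ℝ ((V i : Set Pt)), b ≤ ‖p - x‖ := by
      intro x hx
      exact hmin x (by rw [hXeq]; exact Set.mem_iUnion.2 ⟨i, hx⟩)
    rcases key (V i) p q b hb hqi hpq hmin' with ⟨v, hvV, hvb⟩ | ⟨v₁, hv₁V, v₂, hv₂V, hne, hseg⟩
    · -- sphere case
      right
      have hvW : v ∈ W := Finset.mem_biUnion.mpr ⟨i, Finset.mem_univ i, hvV⟩
      obtain ⟨j, hj⟩ := hlW v hvW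
      refine Set.mem_iUnion.2 ⟨j, ?_⟩
      rw [Metric.mem_sphere, dist_eq_norm, show qf j = v from hj]
      exact hvb
    · -- segment case
      left
      obtain ⟨j₁, hj₁⟩ := hlW v₁ (Finset.mem_biUnion.mpr ⟨i, Finset.mem_univ i, hv₁V⟩)
      obtain ⟨j₂, hj₂⟩ := hlW v₂ (Finset.mem_biUnion.mpr ⟨i, Finset.mem_univ i, hv₂V⟩)
      refine Set.mem_iUnion.2 ⟨finProdFinEquiv (j₁, j₂), ?_⟩
      have hsymm : finProdFinEquiv.symm (finProdFinEquiv (j₁, j₂)) = (j₁, j₂) :=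
        Equiv.symm_apply_apply _ _
      show p ∈ seg _ _
      simp only [hEf_def, hsymm, show qf j₁ = v₁ from hj₁, show qf j₂ = v₂ from hj₂]
      exact hseg

end
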